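/- (Thermalization under the energy eigenstate thermalization hypothesis.) Let E be a finite-dimensional complex inner product space, H a self-adjoint operator on E, and (ψ_j)_{j∈J} an orthonormal family of eigenvectors of H with pairwise distinct eigenvalues E_j, J finite. Let P be a positive semidefinite self-adjoint operator, let V > 0 and κ > 0, and assume ⟨ψ_j, P ψ_j⟩ ≤ exp(−κV) for every j ∈ J. Then for every unit vector φ₀ in the span of (ψ_j)_{j∈J}, with φ(t) := exp(−itH)φ₀, the long-time average converges and satisfies lim_{τ→∞} (1/τ)∫₀^τ ⟨φ(t), P φ(t)⟩ dt ≤ exp(−κV). -/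

import Mathlib

open MeasureTheory Filter

lemma exp_apply_eigenvector {E : Type*} [NormedAddCommGroup E] [InnerProductSpace ℂ E]
    [FiniteDimensional ℂ E] (A : E →L[ℂ] E) (x : E) (μ : ℂ) (h : A x = μ • x) :
    NormedSpace.exp A x = Complex.exp μ • x := by
  have hpow : ∀ n : ℕ, (A ^ n) x = μ ^ n • x := by
    intro n
    induction n with
    | zero => simp
    | succ n ih =>
        rw [pow_succ, pow_succ, ContinuousLinearMap.mul_apply, h, (A ^ n).map_smul, ih, smul_smul,
          mul_comm]
  have hsum : Summable fun n : ℕ => ((Nat.factorial n : ℂ))⁻¹ • A ^ n :=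
    NormedSpace.expSeries_summable' A
  have hsumC : Summable fun n : ℕ => ((Nat.factorial n : ℂ))⁻¹ * μ ^ n := by
    simpa [smul_eq_mul] using NormedSpace.expSeries_summable' (𝕂 := ℂ) μ
  calc NormedSpace.exp A x = (∑' n : ℕ, ((Nat.factorial n : ℂ))⁻¹ • A ^ n) x := by
        rw [NormedSpace.exp_eq_tsum (𝕂 := ℂ)]
    _ = ∑' n : ℕ, (((Nat.factorial n : ℂ))⁻¹ • A ^ n) x := by
        exact ((ContinuousLinearMap.apply ℂ E x).map_tsum hsum)
    _ = ∑' n : ℕ, (((Nat.factorial n : ℂ))⁻¹ * μ ^ n) • x := by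
        simp [hpow, smul_smul]
    _ = (∑' n : ℕ, ((Nat.factorial n : ℂ))⁻¹ * μ ^ n) • x := by
        exact (Summable.tsum_smul_const hsumC x)
    _ = Complex.exp μ • x := by
        rw [Complex.exp_eq_exp_ℂ, NormedSpace.exp_eq_tsum (𝕂 := ℂ)]
        simp [smul_eq_mul]

/-- **Thermalization under the energy eigenstate thermalization hypothesis.**  If every
eigenstate `ψ_j` (orthonormal, with pairwise distinct eigenvalues) of the self-adjoint
Hamiltonian `H` satisfies `⟪ψ_j, P ψ_j⟫ ≤ exp(−κV)` for a positive semidefinite self-adjoint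
`P`, then for every unit vector `φ₀` in the span of the `ψ_j`, the long-time average of
`⟪φ(t), P φ(t)⟫` along `φ(t) = exp(−itH)φ₀` converges and its limit is at most `exp(−κV)`. -/
theorem thermalization_from_ETH
    {E : Type*} [NormedAddCommGroup E] [InnerProductSpace ℂ E] [FiniteDimensional ℂ E]
    (H : E →L[ℂ] E) (hH : IsSelfAdjoint H)
    {J : Type*} [Fintype J]
    (ψ : J → E) (hψ : Orthonormal ℂ ψ)
    (Ej : J → ℝ) (hEj : Function.Injective Ej)
    (heig : ∀ j, H (ψ j) = (Ej j : ℂ) • ψ j)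
    (P : E →L[ℂ] E) (hP : IsSelfAdjoint P)
    (hpos : ∀ x : E, 0 ≤ (inner ℂ x (P x) : ℂ).re)
    (V κ : ℝ) (hV : 0 < V) (hκ : 0 < κ)
    (hETH : ∀ j, (inner ℂ (ψ j) (P (ψ j)) : ℂ).re ≤ Real.exp (-κ * V))
    (φ0 : E) (hmem : φ0 ∈ Submodule.span ℂ (Set.range ψ)) (hφ0 : ‖φ0‖ = 1)
    (φ : ℝ → E) (hφ : ∀ t : ℝ, φ t = NormedSpace.exp (((-Complex.I) * (t : ℂ)) • H) φ0) :
    ∃ ℓ : ℝ,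
      Tendsto (fun τ : ℝ => (1 / τ) * ∫ t in (0:ℝ)..τ, (inner ℂ (φ t) (P (φ t)) : ℂ).re)
        atTop (nhds ℓ) ∧ ℓ ≤ Real.exp (-κ * V) := by
  classical
  obtain ⟨c, hc⟩ := (Submodule.mem_span_range_iff_exists_fun ℂ).mp hmem
  -- coefficients, matrix elements, frequencies
  set p : J → J → ℂ := fun j k => inner ℂ (ψ j) (P (ψ k)) with hp
  set a : J → J → ℂ := fun j k => (starRingEnd ℂ) (c j) * c k * p j k with ha
  set ω : J → J → ℝ := fun j k => Ej j - Ej k with hω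
  -- sum of |c j|^2 is 1
  have hnorm : ∑ j, ‖c j‖ ^ 2 = 1 := by
    have h1 : (inner ℂ φ0 φ0 : ℂ) = ∑ j, (starRingEnd ℂ) (c j) * c j := by
      rw [← hc]; exact hψ.inner_sum c c Finset.univ
    have h2 : (inner ℂ φ0 φ0 : ℂ) = 1 := by
      rw [inner_self_eq_norm_sq_to_K, hφ0]; norm_num
    have h3 : ((∑ j, ‖c j‖ ^ 2 : ℝ) : ℂ) = 1 := by
      push_cast
      rw [← h2, h1]
      exact Finset.sum_congr rfl fun j _ => (RCLike.conj_mul (c j)).symm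
    exact_mod_cast h3
  -- expansion of φ t
  have hφt : ∀ t : ℝ, φ t = ∑ j, (Complex.exp (-Complex.I * t * Ej j) * c j) • ψ j := by
    intro t
    rw [hφ, ← hc, map_sum]
    refine Finset.sum_congr rfl fun j _ => ?_
    rw [ContinuousLinearMap.map_smul, exp_apply_eigenvector _ _ (-Complex.I * t * Ej j)
      (by rw [ContinuousLinearMap.smul_apply, heig, smul_smul]), smul_smul, mul_comm]
  -- pointwise formula for the expectation value
  have hF : ∀ t : ℝ, (inner ℂ (φ t) (P (φ t)) : ℂ)
      = ∑ j, ∑ k, a j k * Complex.exp (Complex.I * (ω j k) * t) := by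
    intro t
    rw [hφt t, map_sum, sum_inner]
    refine Finset.sum_congr rfl fun j _ => ?_
    rw [inner_sum]
    refine Finset.sum_congr rfl fun k _ => ?_
    rw [ContinuousLinearMap.map_smul, inner_smul_left, inner_smul_right, map_mul,
      ← Complex.exp_conj]
    have hconj : (starRingEnd ℂ) (-Complex.I * t * Ej j) = Complex.I * t * Ej j := by
      simp [map_mul, Complex.conj_I, Complex.conj_ofReal]
    have hsplit : Complex.exp (Complex.I * ((ω j k : ℝ) : ℂ) * t)
        = Complex.exp (Complex.I * t * Ej j) * Complex.exp (-Complex.I * t * Ej k) := by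
      rw [← Complex.exp_add, hω]
      push_cast
      ring_nf
    rw [hconj, hsplit, ha, hp]
    ring
  -- the averaged exponentials
  have hG : ∀ j k : J, Tendsto
      (fun τ : ℝ => (1 / τ : ℂ) * ∫ t in (0:ℝ)..τ, Complex.exp (Complex.I * (ω j k) * t))
      atTop (nhds (if j = k then 1 else 0)) := by
    intro j k
    by_cases hjk : j = k
    · subst hjk
      simp only [if_pos rfl]
      have : ∀ᶠ τ : ℝ in atTop,
          (1 / τ : ℂ) * ∫ t in (0:ℝ)..τ, Complex.exp (Complex.I * (ω j j) * t) = 1 := by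
        filter_upwards [eventually_gt_atTop (0:ℝ)] with τ hτ
        have : ω j j = 0 := by simp [hω]
        simp only [this, Complex.ofReal_zero, mul_zero, zero_mul, Complex.exp_zero]
        rw [intervalIntegral.integral_const, sub_zero]
        have hne : (τ:ℂ) ≠ 0 := Complex.ofReal_ne_zero.mpr hτ.ne'
        simp only [Complex.real_smul, mul_one]
        field_simp
      exact Tendsto.congr' (EventuallyEq.symm this) tendsto_const_nhds
    · simp only [if_neg hjk]
      have hωne : (ω j k : ℝ) ≠ 0 := sub_ne_zero.mpr fun h => hjk (hEj h)
      have hcne : Complex.I * (ω j k) ≠ 0 := by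
        simp [Complex.I_ne_zero, Complex.ofReal_ne_zero.mpr hωne]
      have hint : ∀ τ : ℝ, (∫ t in (0:ℝ)..τ, Complex.exp (Complex.I * (ω j k) * t))
          = (Complex.exp (Complex.I * (ω j k) * τ) - 1) / (Complex.I * (ω j k)) := by
        intro τ
        rw [integral_exp_mul_complex hcne]
        norm_num
      rw [tendsto_zero_iff_norm_tendsto_zero]
      have hbound : ∀ᶠ τ : ℝ in atTop,
          ‖(1 / τ : ℂ) * ∫ t in (0:ℝ)..τ, Complex.exp (Complex.I * (ω j k) * t)‖
            ≤ (2 / ‖Complex.I * (ω j k : ℂ)‖) * (1 / τ) := by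
        filter_upwards [eventually_gt_atTop (0:ℝ)] with τ hτ
        have h1 : ‖Complex.exp (Complex.I * (ω j k) * τ) - 1‖ ≤ 2 := by
          refine (norm_sub_le _ _).trans ?_
          have he : ‖Complex.exp (Complex.I * (ω j k) * τ)‖ = 1 := by
            rw [Complex.norm_exp]
            have : (Complex.I * (ω j k) * τ).re = 0 := by simp [Complex.mul_re]
            rw [this, Real.exp_zero]
          rw [he]; norm_num
        have h2 : ‖(1:ℂ) / (τ:ℂ)‖ = 1 / τ := by
          rw [norm_div, norm_one]
          simp [abs_of_pos hτ]
        calc ‖(1 / τ : ℂ) * ∫ t in (0:ℝ)..τ, Complex.exp (Complex.I * (ω j k) * t)‖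
            = (1 / τ) * (‖Complex.exp (Complex.I * (ω j k) * τ) - 1‖
                / ‖Complex.I * (ω j k : ℂ)‖) := by
              rw [hint, norm_mul, h2, norm_div]
          _ ≤ (1 / τ) * (2 / ‖Complex.I * (ω j k : ℂ)‖) := by
              gcongr
          _ = (2 / ‖Complex.I * (ω j k : ℂ)‖) * (1 / τ) := by ring
      refine squeeze_zero' (Eventually.of_forall fun τ => norm_nonneg _) hbound ?_
      have h0 : Tendsto (fun τ : ℝ => (1:ℝ) / τ) atTop (nhds 0) := by
        simpa [one_div] using tendsto_inv_atTop_zero (𝕜 := ℝ)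
      simpa using h0.const_mul (2 / ‖Complex.I * (ω j k : ℂ)‖)
  -- continuity of the exponentials
  have hcont : ∀ j k : J, Continuous fun t : ℝ => Complex.exp (Complex.I * (ω j k) * t) :=
    fun j k => Complex.continuous_exp.comp (continuous_const.mul Complex.continuous_ofReal)
  have hFc : Continuous fun t : ℝ =>
      ∑ j, ∑ k, a j k * Complex.exp (Complex.I * (ω j k) * t) :=
    continuous_finset_sum _ fun j _ => continuous_finset_sum _ fun k _ =>
      continuous_const.mul (hcont j k)
  -- rewrite the time average
  have heq : ∀ τ : ℝ, (1 / τ) * ∫ t in (0:ℝ)..τ, (inner ℂ (φ t) (P (φ t)) : ℂ).re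
      = (∑ j, ∑ k, a j k *
          ((1 / τ : ℂ) * ∫ t in (0:ℝ)..τ, Complex.exp (Complex.I * (ω j k) * t))).re := by
    intro τ
    have hFi : IntervalIntegrable
        (fun t => ∑ j, ∑ k, a j k * Complex.exp (Complex.I * (ω j k) * t)) volume 0 τ :=
      hFc.intervalIntegrable _ _
    have h1 : (∫ t in (0:ℝ)..τ, (inner ℂ (φ t) (P (φ t)) : ℂ).re)
        = (∫ t in (0:ℝ)..τ, ∑ j, ∑ k, a j k * Complex.exp (Complex.I * (ω j k) * t)).re := by
      calc (∫ t in (0:ℝ)..τ, (inner ℂ (φ t) (P (φ t)) : ℂ).re)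
          = ∫ t in (0:ℝ)..τ, Complex.reCLM
              (∑ j, ∑ k, a j k * Complex.exp (Complex.I * (ω j k) * t)) :=
            intervalIntegral.integral_congr fun t _ => by rw [← hF t]; rfl
        _ = Complex.reCLM (∫ t in (0:ℝ)..τ,
              ∑ j, ∑ k, a j k * Complex.exp (Complex.I * (ω j k) * t)) :=
            Complex.reCLM.intervalIntegral_comp_comm hFi
        _ = (∫ t in (0:ℝ)..τ, ∑ j, ∑ k,
              a j k * Complex.exp (Complex.I * (ω j k) * t)).re := rfl
    have h2 : (∫ t in (0:ℝ)..τ, ∑ j, ∑ k, a j k * Complex.exp (Complex.I * (ω j k) * t))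
        = ∑ j, ∑ k, a j k * ∫ t in (0:ℝ)..τ, Complex.exp (Complex.I * (ω j k) * t) := by
      rw [intervalIntegral.integral_finset_sum fun j _ =>
        (continuous_finset_sum _ fun k _ =>
          continuous_const.mul (hcont j k) : Continuous fun t : ℝ =>
            ∑ k, a j k * Complex.exp (Complex.I * (ω j k) * t)).intervalIntegrable _ _]
      refine Finset.sum_congr rfl fun j _ => ?_
      rw [intervalIntegral.integral_finset_sum
        (f := fun k (t : ℝ) => a j k * Complex.exp (Complex.I * (ω j k) * t)) fun k _ =>
        (continuous_const.mul (hcont j k)).intervalIntegrable _ _]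
      exact Finset.sum_congr rfl fun k _ => intervalIntegral.integral_const_mul _ _
    rw [h1, h2]
    have h3 : ((1/τ : ℝ) : ℂ) = (1/τ : ℂ) := by push_cast; ring
    rw [← Complex.re_ofReal_mul, h3, Finset.mul_sum]
    congr 1
    refine Finset.sum_congr rfl fun j _ => ?_
    rw [Finset.mul_sum]
    exact Finset.sum_congr rfl fun k _ => by ring
  -- the complex limit
  have htendC : Tendsto (fun τ : ℝ => ∑ j, ∑ k, a j k *
      ((1 / τ : ℂ) * ∫ t in (0:ℝ)..τ, Complex.exp (Complex.I * (ω j k) * t)))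
      atTop (nhds (∑ j, ∑ k, a j k * (if j = k then 1 else 0))) :=
    tendsto_finset_sum _ fun j _ => tendsto_finset_sum _ fun k _ =>
      (hG j k).const_mul (a j k)
  refine ⟨(∑ j, ∑ k, a j k * (if j = k then 1 else 0)).re, ?_, ?_⟩
  · have := (Complex.continuous_re.tendsto _).comp htendC
    exact this.congr fun τ => (heq τ).symm
  · have hsimp : (∑ j, ∑ k, a j k * (if j = k then (1:ℂ) else 0)) = ∑ j, a j j := by
      refine Finset.sum_congr rfl fun j _ => ?_
      rw [Finset.sum_eq_single j (fun k _ hkj => by simp [Ne.symm hkj])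
        (fun h => absurd (Finset.mem_univ j) h)]
      simp
    rw [hsimp, Complex.re_sum]
    have hterm : ∀ j, (a j j).re = ‖c j‖ ^ 2 * (p j j).re := by
      intro j
      have : a j j = ((‖c j‖ ^ 2 : ℝ) : ℂ) * p j j := by
        rw [ha]
        simp only []
        rw [RCLike.conj_mul]
        push_cast
        ring_nf
        exact mul_comm _ _
      rw [this, Complex.re_ofReal_mul]
    calc (∑ j, (a j j).re) = ∑ j, ‖c j‖ ^ 2 * (p j j).re := by
          exact Finset.sum_congr rfl fun j _ => hterm j
      _ ≤ ∑ j, ‖c j‖ ^ 2 * Real.exp (-κ * V) := by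
          refine Finset.sum_le_sum fun j _ => ?_
          exact mul_le_mul_of_nonneg_left (hETH j) (sq_nonneg _)
      _ = Real.exp (-κ * V) := by
          rw [← Finset.sum_mul, hnorm, one_mul]
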